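/- Under the MIS/RMIS tableau setup, assume the inner weights satisfy the quadrature conditions (b^I)^⊺𝟙 = 1 and (b^I)^⊺c^I = 1/2. Then A^{s,f} c^f = (1/2)(c^O × c^O), i.e. for every i = 1,…,s^O the i-th entry of A^{s,f} c^f equals (1/2)(c^O_i)^2. -/
import Mathlib


open Matrix BigOperators Finset

/-- The increments `d_j = c^O_{j+1} - c^O_j` (with `d_{s^O} = 1 - c^O_{s^O}`). -/
noncomputable def misD (sO : ℕ) (cO : Fin sO → ℝ) (j : Fin sO) : ℝ :=
  if h : j.val + 1 < sO then cO ⟨j.val + 1, h⟩ - cO j else 1 - cO j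

/-- The fast-fast GARK coefficient matrix `A^{f,f}` of the MIS/RMIS tableau. -/
noncomputable def misAff (sI sO : ℕ) (AI : Matrix (Fin sI) (Fin sI) ℝ)
    (bI : Fin sI → ℝ) (cO : Fin sO → ℝ) :
    Matrix (Fin sO × Fin sI) (Fin sO × Fin sI) ℝ :=
  fun ip jq =>
    if jq.1 < ip.1 then misD sO cO jq.1 * bI jq.2
    else if jq.1 = ip.1 then misD sO cO ip.1 * AI ip.2 jq.2
    else 0

/-- The slow-fast GARK coefficient matrix `A^{s,f}` of the MIS/RMIS tableau. -/
noncomputable def misAsf (sI sO : ℕ) (bI : Fin sI → ℝ) (cO : Fin sO → ℝ) :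
    Matrix (Fin sO) (Fin sO × Fin sI) ℝ :=
  fun i jq => if jq.1 < i then misD sO cO jq.1 * bI jq.2 else 0

/-- The fast-slow GARK coefficient matrix `A^{f,s}` of the MIS/RMIS tableau. -/
noncomputable def misAfs (sI sO : ℕ) (cI : Fin sI → ℝ)
    (AO : Matrix (Fin sO) (Fin sO) ℝ) (bO : Fin sO → ℝ) :
    Matrix (Fin sO × Fin sI) (Fin sO) ℝ :=
  fun ip j =>
    if ip.1.val = 0 then
      (if h : 1 < sO then cI ip.2 * AO ⟨1, h⟩ j else 0)
    else if h : ip.1.val + 1 < sO then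
      AO ip.1 j + cI ip.2 * (AO ⟨ip.1.val + 1, h⟩ j - AO ip.1 j)
    else
      AO ip.1 j + cI ip.2 * (bO j - AO ip.1 j)

/-- The fast abscissae `c^f` of the MIS/RMIS tableau. -/
noncomputable def misCf (sI sO : ℕ) (cI : Fin sI → ℝ) (cO : Fin sO → ℝ) :
    Fin sO × Fin sI → ℝ :=
  fun ip => cO ip.1 + misD sO cO ip.1 * cI ip.2

/-- The RMIS fast weights `b^f` (i-th block is `b^O_i e_1`). -/
noncomputable def misBf (sI sO : ℕ) (bO : Fin sO → ℝ) : Fin sO × Fin sI → ℝ :=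
  fun ip => if ip.2.val = 0 then bO ip.1 else 0

/-- The vector `v^O` appearing in the fourth-order RMIS condition. -/
noncomputable def misV (sO : ℕ) (bO cO : Fin sO → ℝ) (i : Fin sO) : ℝ :=
  if i.val = 0 then 0
  else if h : i.val + 1 < sO then
    bO i * (cO i - cO ⟨i.val - 1, by have := i.isLt; omega⟩) +
      (cO ⟨i.val + 1, h⟩ - cO ⟨i.val - 1, by have := i.isLt; omega⟩) *
        ∑ j ∈ Finset.univ.filter (fun j => i < j), bO j
  else bO i * (cO i - cO ⟨i.val - 1, by have := i.isLt; omega⟩)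

/-- If the inner weights satisfy `(b^I)ᵀ𝟙 = 1` and `(b^I)ᵀc^I = 1/2`,
then `A^{s,f} c^f = (1/2) (c^O × c^O)` entrywise. -/
theorem asf_cf_eq_half_cO_sq (sI sO : ℕ) (hsI : 1 ≤ sI) (hsO : 2 ≤ sO)
    (AI : Matrix (Fin sI) (Fin sI) ℝ) (bI cI : Fin sI → ℝ)
    (AO : Matrix (Fin sO) (Fin sO) ℝ) (bO cO : Fin sO → ℝ)
    (hcO1 : cO ⟨0, by omega⟩ = 0)
    (hbI1 : ∑ q, bI q = 1)
    (hbI2 : ∑ q, bI q * cI q = 1 / 2) :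
    ∀ i : Fin sO, (misAsf sI sO bI cO *ᵥ misCf sI sO cI cO) i = (1 / 2) * (cO i) ^ 2 := by
  -- auxiliary ℕ-indexed term
  set g : ℕ → ℝ := fun n =>
    if h : n < sO then
      misD sO cO ⟨n, h⟩ * (cO ⟨n, h⟩ + misD sO cO ⟨n, h⟩ * (1 / 2))
    else 0 with hg
  have key : ∀ n, ∀ h : n < sO, ∑ j ∈ Finset.range n, g j = (1 / 2) * (cO ⟨n, h⟩) ^ 2 := by
    intro n
    induction n with
    | zero =>
      intro h
      have : cO ⟨0, h⟩ = 0 := hcO1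
      simp [this]
    | succ n ih =>
      intro h
      have hn : n < sO := by omega
      rw [Finset.sum_range_succ, ih hn]
      have hgn : g n = misD sO cO ⟨n, hn⟩ * (cO ⟨n, hn⟩ + misD sO cO ⟨n, hn⟩ * (1 / 2)) := by
        simp [hg, hn]
      have hd : misD sO cO ⟨n, hn⟩ = cO ⟨n + 1, h⟩ - cO ⟨n, hn⟩ := by
        simp [misD, h]
      rw [hgn, hd]; ring
  intro i
  have inner : ∀ j : Fin sO,
      (∑ q, (misD sO cO j * bI q) * (cO j + misD sO cO j * cI q))
        = misD sO cO j * (cO j + misD sO cO j * (1 / 2)) := by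
    intro j
    have : (∑ q, (misD sO cO j * bI q) * (cO j + misD sO cO j * cI q))
        = misD sO cO j * cO j * (∑ q, bI q)
          + misD sO cO j * misD sO cO j * (∑ q, bI q * cI q) := by
      rw [Finset.mul_sum, Finset.mul_sum, ← Finset.sum_add_distrib]
      apply Finset.sum_congr rfl
      intros; ring
    rw [this, hbI1, hbI2]; ring
  have expand : (misAsf sI sO bI cO *ᵥ misCf sI sO cI cO) i
      = ∑ j : Fin sO, (if j < i then
          ∑ q, (misD sO cO j * bI q) * (cO j + misD sO cO j * cI q) else 0) := by
    rw [Matrix.mulVec, dotProduct]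
    rw [Fintype.sum_prod_type]
    apply Finset.sum_congr rfl
    intro j _
    by_cases hj : j < i
    · simp only [misAsf, misCf, hj, if_true]
    · simp [misAsf, misCf, hj]
  rw [expand]
  have step : (∑ j : Fin sO, (if j < i then
      ∑ q, (misD sO cO j * bI q) * (cO j + misD sO cO j * cI q) else 0))
      = ∑ j : Fin sO, (if (j : ℕ) < (i : ℕ) then g (j : ℕ) else 0) := by
    apply Finset.sum_congr rfl
    intro j _
    by_cases hj : j < i
    · have hj' : (j : ℕ) < (i : ℕ) := hj
      rw [if_pos hj, if_pos hj', inner j]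
      simp [hg, j.isLt]
    · have hj' : ¬ (j : ℕ) < (i : ℕ) := fun h => hj h
      rw [if_neg hj, if_neg hj']
  rw [step]
  have : (∑ j : Fin sO, (if (j : ℕ) < (i : ℕ) then g (j : ℕ) else 0))
      = ∑ j ∈ Finset.range i.val, g j := by
    rw [Fin.sum_univ_eq_sum_range (fun n => if n < (i : ℕ) then g n else 0) sO]
    rw [← Finset.sum_filter]
    apply Finset.sum_congr
    · ext m
      simp only [Finset.mem_filter, Finset.mem_range]
      constructor
      · rintro ⟨_, h⟩; exact h
      · intro h; exact ⟨lt_trans h i.isLt, h⟩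
    · intros; rfl
  rw [this, key i.val i.isLt]
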